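/- Let X₁ ~ Gamma(α₁, scale θ₁) and X₂ ~ Gamma(α₂, scale θ₂) be independent with 0 < θ₁ ≤ θ₂. If ν(α₁+α₂) ≤ α₁, where ν(α) is the median of Gamma(α,1), then under the GPN criterion with any loss W(a/θ₁) (W(1)=0, W strictly decreasing on (0,1), strictly increasing on (1,∞)), the unbiased estimator δ_UE(X) = X₁/α₁ satisfies GPN(δ_UE, δ_RMLE; θ) > 1/2 for all θ₁ ≤ θ₂, where δ_RMLE(X) = min{X₁/α₁, (X₁+X₂)/(α₁+α₂)}. -/

import Mathlib

open MeasureTheory ProbabilityTheory Set Real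
open scoped ENNReal

lemma lint_scale (b : ℝ) (hb : 0 < b) (g : ℝ → ℝ) (hg : Measurable g)
    (s : Set ℝ) (hs : MeasurableSet s) :
    ∫⁻ y in s, ENNReal.ofReal (g y) =
      ∫⁻ t in (fun t => b * t) ⁻¹' s, ENNReal.ofReal (b * g (b * t)) := by
  have h2 : (volume : Measure ℝ)
      = ENNReal.ofReal b • Measure.map (fun t : ℝ => b * t) volume := by
    rw [Real.map_volume_mul_left hb.ne', smul_smul, abs_of_pos (inv_pos.2 hb),
      ← ENNReal.ofReal_mul hb.le, mul_inv_cancel₀ hb.ne', ENNReal.ofReal_one, one_smul]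
  calc ∫⁻ y in s, ENNReal.ofReal (g y)
      = ∫⁻ y in s, ENNReal.ofReal (g y)
          ∂(ENNReal.ofReal b • Measure.map (fun t : ℝ => b * t) volume) := by rw [← h2]
    _ = ENNReal.ofReal b * ∫⁻ y in s, ENNReal.ofReal (g y)
          ∂(Measure.map (fun t : ℝ => b * t) volume) := by
        rw [Measure.restrict_smul, lintegral_smul_measure, smul_eq_mul]
    _ = ENNReal.ofReal b * ∫⁻ t in (fun t => b * t) ⁻¹' s, ENNReal.ofReal (g (b * t)) := by
        rw [setLIntegral_map hs hg.ennreal_ofReal (measurable_const_mul b)]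
    _ = ∫⁻ t in (fun t => b * t) ⁻¹' s, ENNReal.ofReal (b * g (b * t)) := by
        rw [← lintegral_const_mul (f := fun t => ENNReal.ofReal (g (b * t))) _ (by fun_prop)]
        exact lintegral_congr fun t => by rw [← ENNReal.ofReal_mul hb.le]

lemma median_lt (s M νs : ℝ) (hs : 0 < s)
    (hmed : ∫ x in Ioc 0 νs, x ^ (s - 1) * Real.exp (-x) = Real.Gamma s / 2)
    (hM : νs < M) :
    (∫⁻ y in Ioi M, ENNReal.ofReal (y ^ (s - 1) * Real.exp (-y)) <
      ∫⁻ y in Ioc 0 M, ENNReal.ofReal (y ^ (s - 1) * Real.exp (-y))) ∧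
    ∫⁻ y in Ioc 0 M, ENNReal.ofReal (y ^ (s - 1) * Real.exp (-y)) ≠ ∞ := by
  set f : ℝ → ℝ := fun y => y ^ (s - 1) * Real.exp (-y) with hf
  have hGpos : 0 < Real.Gamma s := Real.Gamma_pos_of_pos hs
  have hint : IntegrableOn f (Ioi 0) :=
    (Real.GammaIntegral_convergent hs).congr_fun (fun x _ => mul_comm _ _) measurableSet_Ioi
  have hν0 : 0 < νs := by
    by_contra h
    push_neg at h
    rw [Set.Ioc_eq_empty (by simpa using h), Measure.restrict_empty, integral_zero_measure] at hmed
    linarith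
  have h0M : 0 < M := hν0.trans hM
  have hfpos : ∀ y : ℝ, 0 < y → 0 < f y :=
    fun y hy => mul_pos (Real.rpow_pos_of_pos hy _) (Real.exp_pos _)
  have hint1 : IntegrableOn f (Ioc 0 M) := hint.mono_set Ioc_subset_Ioi_self
  have hint2 : IntegrableOn f (Ioi M) := hint.mono_set (Ioi_subset_Ioi h0M.le)
  have hintm : IntegrableOn f (Ioc νs M) :=
    hint.mono_set (fun y hy => lt_trans hν0 hy.1)
  -- Gamma = I1 + I2
  have hGamma : Real.Gamma s = (∫ y in Ioc 0 M, f y) + ∫ y in Ioi M, f y := by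
    rw [Real.Gamma_eq_integral hs,
      integral_congr_ae (g := f) (Filter.Eventually.of_forall fun x => mul_comm _ _),
      ← Set.Ioc_union_Ioi_eq_Ioi h0M.le,
      setIntegral_union (Set.Ioc_disjoint_Ioi le_rfl) measurableSet_Ioi hint1 hint2]
  -- I1 > Gamma/2
  have hsplit : (∫ y in Ioc 0 M, f y) = Real.Gamma s / 2 + ∫ y in Ioc νs M, f y := by
    rw [← hmed, ← setIntegral_union (Set.Ioc_disjoint_Ioc_of_le le_rfl) measurableSet_Ioc
        (hint.mono_set (Set.Ioc_subset_Ioi_self.trans (Set.Ioi_subset_Ioi le_rfl))) hintm,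
      Set.Ioc_union_Ioc_eq_Ioc hν0.le hM.le]
  have hpos : 0 < ∫ y in Ioc νs M, f y := by
    rw [setIntegral_pos_iff_support_of_nonneg_ae]
    · have hsup : Ioc νs M ⊆ Function.support f ∩ Ioc νs M :=
        fun y hy => ⟨(hfpos y (hν0.trans hy.1)).ne', hy⟩
      refine lt_of_lt_of_le ?_ (measure_mono hsup)
      simp [Real.volume_Ioc, hM]
    · refine (ae_restrict_iff' measurableSet_Ioc).2 (Filter.Eventually.of_forall ?_)
      exact fun y hy => (hfpos y (hν0.trans hy.1)).le
    · exact hintm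
  have hI1 : Real.Gamma s / 2 < ∫ y in Ioc 0 M, f y := by rw [hsplit]; linarith
  have hI2 : (∫ y in Ioi M, f y) < Real.Gamma s / 2 := by linarith
  have hnn1 : 0 ≤ᵐ[volume.restrict (Ioc 0 M)] f :=
    (ae_restrict_iff' measurableSet_Ioc).2 (Filter.Eventually.of_forall fun y hy => (hfpos y hy.1).le)
  have hnn2 : 0 ≤ᵐ[volume.restrict (Ioi M)] f :=
    (ae_restrict_iff' measurableSet_Ioi).2 (Filter.Eventually.of_forall fun y hy => (hfpos y (h0M.trans hy)).le)
  have e1 : ∫⁻ y in Ioc 0 M, ENNReal.ofReal (f y) = ENNReal.ofReal (∫ y in Ioc 0 M, f y) :=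
    (ofReal_integral_eq_lintegral_ofReal hint1 hnn1).symm
  have e2 : ∫⁻ y in Ioi M, ENNReal.ofReal (f y) = ENNReal.ofReal (∫ y in Ioi M, f y) :=
    (ofReal_integral_eq_lintegral_ofReal hint2 hnn2).symm
  refine ⟨?_, by rw [e1]; exact ENNReal.ofReal_ne_top⟩
  rw [e1, e2]
  exact ENNReal.ofReal_lt_ofReal_iff (by linarith) |>.2 (by linarith)

lemma perq (s a q νs : ℝ) (hs : 0 < s) (ha : 0 < a) (hq : 0 < q)
    (hmed : ∫ x in Ioc 0 νs, x ^ (s - 1) * Real.exp (-x) = Real.Gamma s / 2)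
    (hM : νs < q * a) :
    (∫⁻ x in Ioi a, ENNReal.ofReal (x ^ (s - 1) * Real.exp (-(q * x))) <
      ∫⁻ x in Ioc 0 a, ENNReal.ofReal (x ^ (s - 1) * Real.exp (-(q * x)))) ∧
    ∫⁻ x in Ioc 0 a, ENNReal.ofReal (x ^ (s - 1) * Real.exp (-(q * x))) ≠ ∞ := by
  have hqi : 0 < q⁻¹ := inv_pos.2 hq
  have hg : Measurable fun x : ℝ => x ^ (s - 1) * Real.exp (-(q * x)) := by fun_prop
  have hpre1 : (fun t : ℝ => q⁻¹ * t) ⁻¹' (Ioc 0 a) = Ioc 0 (q * a) := by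
    rw [Set.preimage_const_mul_Ioc₀ _ _ hqi, zero_div, div_eq_mul_inv, inv_inv, mul_comm]
  have hpre2 : (fun t : ℝ => q⁻¹ * t) ⁻¹' (Ioi a) = Ioi (q * a) := by
    rw [Set.preimage_const_mul_Ioi₀ _ hqi, div_eq_mul_inv, inv_inv, mul_comm]
  have key : ∀ u : Set ℝ, MeasurableSet u →
      ∫⁻ x in u, ENNReal.ofReal (x ^ (s - 1) * Real.exp (-(q * x))) =
      ∫⁻ t in (fun t : ℝ => q⁻¹ * t) ⁻¹' u,
        ENNReal.ofReal (q⁻¹ * ((q⁻¹ * t) ^ (s - 1) * Real.exp (-(q * (q⁻¹ * t))))) :=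
    fun u hu => lint_scale q⁻¹ hqi _ hg u hu
  have hMpos : 0 < q * a := mul_pos hq ha
  have halg : ∀ t : ℝ, 0 < t →
      q⁻¹ * ((q⁻¹ * t) ^ (s - 1) * Real.exp (-(q * (q⁻¹ * t)))) =
      q⁻¹ ^ s * (t ^ (s - 1) * Real.exp (-t)) := by
    intro t ht
    have h1 : q * (q⁻¹ * t) = t := by field_simp
    have h2 : q⁻¹ ^ (s - 1) * q⁻¹ = q⁻¹ ^ s := by
      rw [Real.rpow_sub_one (ne_of_gt hqi)]; field_simp
    rw [h1, Real.mul_rpow hqi.le ht.le, ← h2]; ring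
  have eq1 : ∫⁻ x in Ioc 0 a, ENNReal.ofReal (x ^ (s - 1) * Real.exp (-(q * x)))
      = ENNReal.ofReal (q⁻¹ ^ s) *
        ∫⁻ t in Ioc 0 (q * a), ENNReal.ofReal (t ^ (s - 1) * Real.exp (-t)) := by
    rw [key _ measurableSet_Ioc, hpre1,
      ← lintegral_const_mul (f := fun t => ENNReal.ofReal (t ^ (s - 1) * Real.exp (-t))) _
        (by fun_prop)]
    refine setLIntegral_congr_fun_ae measurableSet_Ioc (Filter.Eventually.of_forall fun t ht => ?_)
    rw [halg t ht.1, ENNReal.ofReal_mul (by positivity)]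
  have eq2 : ∫⁻ x in Ioi a, ENNReal.ofReal (x ^ (s - 1) * Real.exp (-(q * x)))
      = ENNReal.ofReal (q⁻¹ ^ s) *
        ∫⁻ t in Ioi (q * a), ENNReal.ofReal (t ^ (s - 1) * Real.exp (-t)) := by
    rw [key _ measurableSet_Ioi, hpre2,
      ← lintegral_const_mul (f := fun t => ENNReal.ofReal (t ^ (s - 1) * Real.exp (-t))) _
        (by fun_prop)]
    refine setLIntegral_congr_fun_ae measurableSet_Ioi (Filter.Eventually.of_forall fun t ht => ?_)
    rw [halg t (hMpos.trans ht), ENNReal.ofReal_mul (by positivity)]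
  obtain ⟨hlt, hfin⟩ := median_lt s (q * a) νs hs hmed hM
  have hc0 : ENNReal.ofReal (q⁻¹ ^ s) ≠ 0 :=
    (ENNReal.ofReal_pos.2 (Real.rpow_pos_of_pos hqi s)).ne'
  constructor
  · rw [eq1, eq2]
    exact (ENNReal.mul_lt_mul_iff_right hc0 ENNReal.ofReal_ne_top).2 hlt
  · rw [eq1]
    exact ENNReal.mul_ne_top ENNReal.ofReal_ne_top hfin

/-- Example 4.1.1 (iv): for independent gammas with ordered scales, if
`ν(α₁+α₂) ≤ α₁` then the unbiased estimator `X₁/α₁` is Pitman nearer to `θ₁`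
than the restricted MLE `min{X₁/α₁, (X₁+X₂)/(α₁+α₂)}` under the GPN criterion
with a general scale loss `W(a/θ₁)`. -/
theorem stmt_11 {Ω : Type*} [MeasureSpace Ω] [IsProbabilityMeasure (ℙ : Measure Ω)]
    (α₁ α₂ θ₁ θ₂ : ℝ) (hα₁ : 0 < α₁) (hα₂ : 0 < α₂)
    (hθ₁ : 0 < θ₁) (hθ : θ₁ ≤ θ₂)
    (X₁ X₂ : Ω → ℝ) (hX₁ : Measurable X₁) (hX₂ : Measurable X₂)
    (hlaw₁ : Measure.map X₁ ℙ = volume.withDensity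
      (fun x => ENNReal.ofReal (if 0 < x then
        x ^ (α₁ - 1) * Real.exp (-x / θ₁) / (Real.Gamma α₁ * θ₁ ^ α₁) else 0)))
    (hlaw₂ : Measure.map X₂ ℙ = volume.withDensity
      (fun x => ENNReal.ofReal (if 0 < x then
        x ^ (α₂ - 1) * Real.exp (-x / θ₂) / (Real.Gamma α₂ * θ₂ ^ α₂) else 0)))
    (hindep : IndepFun X₁ X₂)
    (ν : ℝ → ℝ)
    (hν : ∀ a, 0 < a →
      ∫ x in Ioc 0 (ν a), x ^ (a - 1) * Real.exp (-x) = Real.Gamma a / 2)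
    (hνα : ν (α₁ + α₂) ≤ α₁)
    (W : ℝ → ℝ) (hW1 : W 1 = 0) (hWnn : ∀ t, 0 < t → 0 ≤ W t)
    (hWanti : StrictAntiOn W (Ioo 0 1)) (hWmono : StrictMonoOn W (Ioi 1)) :
    (1 : ℝ≥0∞) / 2 <
      ℙ {ω | W (X₁ ω / α₁ / θ₁) <
              W (min (X₁ ω / α₁) ((X₁ ω + X₂ ω) / (α₁ + α₂)) / θ₁)}
      + (1 / 2) *
        ℙ {ω | W (X₁ ω / α₁ / θ₁) =
                W (min (X₁ ω / α₁) ((X₁ ω + X₂ ω) / (α₁ + α₂)) / θ₁)} := by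
  have hθ₂ : 0 < θ₂ := hθ₁.trans_le hθ
  have hs : 0 < α₁ + α₂ := by linarith
  set a : ℝ := α₁ * θ₁ with ha_def
  have ha : 0 < a := mul_pos hα₁ hθ₁
  set EE : Set Ω := {ω | 0 < X₁ ω ∧ 0 < X₂ ω ∧ α₂ * X₁ ω ≤ α₁ * X₂ ω} with hEE_def
  set EB : Set Ω := {ω | 0 < X₁ ω ∧ X₁ ω ≤ a ∧ 0 < X₂ ω ∧ α₁ * X₂ ω < α₂ * X₁ ω} with hEB_def
  set EC : Set Ω := {ω | a < X₁ ω ∧ 0 < X₂ ω ∧ α₁ * X₂ ω < α₂ * X₁ ω} with hEC_def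
  -- inclusion for the equality event
  have hincl_eq : EE ⊆ {ω | W (X₁ ω / α₁ / θ₁) =
      W (min (X₁ ω / α₁) ((X₁ ω + X₂ ω) / (α₁ + α₂)) / θ₁)} := by
    rintro ω ⟨h1, h2, h3⟩
    have hmin : min (X₁ ω / α₁) ((X₁ ω + X₂ ω) / (α₁ + α₂)) = X₁ ω / α₁ := by
      refine min_eq_left ?_
      rw [div_le_div_iff₀ hα₁ hs]
      nlinarith
    simp only [mem_setOf_eq, hmin]
  -- inclusion for the strict event
  have hincl_lt : EB ⊆ {ω | W (X₁ ω / α₁ / θ₁) <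
      W (min (X₁ ω / α₁) ((X₁ ω + X₂ ω) / (α₁ + α₂)) / θ₁)} := by
    rintro ω ⟨h1, h4, h2, h3⟩
    have hmlt : (X₁ ω + X₂ ω) / (α₁ + α₂) < X₁ ω / α₁ := by
      rw [div_lt_div_iff₀ hs hα₁]
      nlinarith
    have hmin : min (X₁ ω / α₁) ((X₁ ω + X₂ ω) / (α₁ + α₂)) = (X₁ ω + X₂ ω) / (α₁ + α₂) :=
      min_eq_right hmlt.le
    simp only [mem_setOf_eq, hmin]
    set u : ℝ := X₁ ω / α₁ / θ₁ with hu_def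
    set v : ℝ := (X₁ ω + X₂ ω) / (α₁ + α₂) / θ₁ with hv_def
    have hu0 : 0 < u := by positivity
    have hv0 : 0 < v := by positivity
    have hvu : v < u := by
      rw [hu_def, hv_def]
      gcongr
    have hu1 : u ≤ 1 := by
      rw [hu_def, div_le_one hθ₁, div_le_iff₀ hα₁]
      linarith [h4]
    rcases lt_or_eq_of_le hu1 with hu1' | hu1'
    · exact hWanti ⟨hv0, hvu.trans hu1'⟩ ⟨hu0, hu1'⟩ hvu
    · have hv1 : v < 1 := by rw [← hu1']; exact hvu
      have hw0 : 0 < (v + 1) / 2 := by linarith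
      have hw1 : (v + 1) / 2 < 1 := by linarith
      have hvw : v < (v + 1) / 2 := by linarith
      have h5 : W ((v + 1) / 2) < W v := hWanti ⟨hv0, hv1⟩ ⟨hw0, hw1⟩ hvw
      have h6 : 0 ≤ W ((v + 1) / 2) := hWnn _ hw0
      rw [hu1', hW1]
      linarith
  -- the nonpositive parts are null
  have hz₁ : ℙ {ω | ¬ (0 < X₁ ω)} = 0 := by
    have hset : {ω | ¬ (0 < X₁ ω)} = X₁ ⁻¹' (Iic 0) := by ext ω; simp [not_lt]
    rw [hset, ← Measure.map_apply hX₁ measurableSet_Iic, hlaw₁,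
      withDensity_apply _ measurableSet_Iic]
    rw [setLIntegral_congr_fun measurableSet_Iic (
      (fun x (hx : x ≤ 0) => by rw [if_neg (not_lt.2 hx)]; simp) :
        ∀ x, x ∈ Iic 0 → ENNReal.ofReal (if 0 < x then
          x ^ (α₁ - 1) * Real.exp (-x / θ₁) / (Real.Gamma α₁ * θ₁ ^ α₁) else 0) = 0),
      lintegral_zero]
  have hz₂ : ℙ {ω | ¬ (0 < X₂ ω)} = 0 := by
    have hset : {ω | ¬ (0 < X₂ ω)} = X₂ ⁻¹' (Iic 0) := by ext ω; simp [not_lt]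
    rw [hset, ← Measure.map_apply hX₂ measurableSet_Iic, hlaw₂,
      withDensity_apply _ measurableSet_Iic]
    rw [setLIntegral_congr_fun measurableSet_Iic (
      (fun x (hx : x ≤ 0) => by rw [if_neg (not_lt.2 hx)]; simp) :
        ∀ x, x ∈ Iic 0 → ENNReal.ofReal (if 0 < x then
          x ^ (α₂ - 1) * Real.exp (-x / θ₂) / (Real.Gamma α₂ * θ₂ ^ α₂) else 0) = 0),
      lintegral_zero]
  -- covering
  have hcov : (1 : ℝ≥0∞) ≤ ℙ EE + (ℙ EB + ℙ EC) := by
    have hsub : (univ : Set Ω) ⊆ {ω | ¬ (0 < X₁ ω)} ∪ ({ω | ¬ (0 < X₂ ω)} ∪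
        (EE ∪ (EB ∪ EC))) := by
      intro ω _
      by_cases h1 : 0 < X₁ ω
      · by_cases h2 : 0 < X₂ ω
        · by_cases h3 : α₂ * X₁ ω ≤ α₁ * X₂ ω
          · exact Or.inr (Or.inr (Or.inl ⟨h1, h2, h3⟩))
          · push_neg at h3
            by_cases h4 : X₁ ω ≤ a
            · exact Or.inr (Or.inr (Or.inr (Or.inl ⟨h1, h4, h2, h3⟩)))
            · push_neg at h4
              exact Or.inr (Or.inr (Or.inr (Or.inr ⟨h4, h2, h3⟩)))
        · exact Or.inr (Or.inl h2)
      · exact Or.inl h1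
    calc (1 : ℝ≥0∞) = ℙ univ := measure_univ.symm
      _ ≤ ℙ ({ω | ¬ (0 < X₁ ω)} ∪ ({ω | ¬ (0 < X₂ ω)} ∪ (EE ∪ (EB ∪ EC)))) :=
          measure_mono hsub
      _ ≤ ℙ {ω | ¬ (0 < X₁ ω)} + ℙ ({ω | ¬ (0 < X₂ ω)} ∪ (EE ∪ (EB ∪ EC))) :=
          measure_union_le _ _
      _ ≤ ℙ {ω | ¬ (0 < X₁ ω)} + (ℙ {ω | ¬ (0 < X₂ ω)} + ℙ (EE ∪ (EB ∪ EC))) := by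
          gcongr
          exact measure_union_le _ _
      _ ≤ ℙ {ω | ¬ (0 < X₁ ω)} + (ℙ {ω | ¬ (0 < X₂ ω)} + (ℙ EE + ℙ (EB ∪ EC))) := by
          gcongr
          exact measure_union_le _ _
      _ ≤ ℙ {ω | ¬ (0 < X₁ ω)} + (ℙ {ω | ¬ (0 < X₂ ω)} + (ℙ EE + (ℙ EB + ℙ EC))) := by
          gcongr
          exact measure_union_le _ _
      _ = ℙ EE + (ℙ EB + ℙ EC) := by rw [hz₁, hz₂, zero_add, zero_add]
  -- the key strict inequality
  have hCB : ℙ EC < ℙ EB := by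
    classical
    set c : ℝ := α₂ / α₁ with hc_def
    have hc : 0 < c := div_pos hα₂ hα₁
    set g₁ : ℝ → ℝ := fun x => if 0 < x then
        x ^ (α₁ - 1) * Real.exp (-x / θ₁) / (Real.Gamma α₁ * θ₁ ^ α₁) else 0 with hg₁def
    set g₂ : ℝ → ℝ := fun x => if 0 < x then
        x ^ (α₂ - 1) * Real.exp (-x / θ₂) / (Real.Gamma α₂ * θ₂ ^ α₂) else 0 with hg₂def
    have hg₁m : Measurable g₁ := by
      rw [hg₁def]
      exact Measurable.ite (measurableSet_lt measurable_const measurable_id)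
        (by fun_prop) measurable_const
    have hg₂m : Measurable g₂ := by
      rw [hg₂def]
      exact Measurable.ite (measurableSet_lt measurable_const measurable_id)
        (by fun_prop) measurable_const
    set μ₁' : Measure ℝ := volume.withDensity fun x => ENNReal.ofReal (g₁ x) with hμ₁def
    set μ₂' : Measure ℝ := volume.withDensity fun x => ENNReal.ofReal (g₂ x) with hμ₂def
    have hlaw₁' : Measure.map X₁ ℙ = μ₁' := hlaw₁
    have hlaw₂' : Measure.map X₂ ℙ = μ₂' := hlaw₂
    have hmap : Measure.map (fun ω => (X₁ ω, X₂ ω)) ℙ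
        = (Measure.map X₁ ℙ).prod (Measure.map X₂ ℙ) :=
      (ProbabilityTheory.indepFun_iff_map_prod_eq_prod_map_map
        hX₁.aemeasurable hX₂.aemeasurable).mp hindep
    set B' : Set (ℝ × ℝ) :=
      {p : ℝ × ℝ | 0 < p.1 ∧ p.1 ≤ a ∧ 0 < p.2 ∧ α₁ * p.2 < α₂ * p.1} with hB'def
    set C' : Set (ℝ × ℝ) :=
      {p : ℝ × ℝ | a < p.1 ∧ 0 < p.2 ∧ α₁ * p.2 < α₂ * p.1} with hC'def
    have hB'm : MeasurableSet B' := by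
      rw [hB'def]
      exact ((measurableSet_lt measurable_const measurable_fst).inter
        ((measurableSet_le measurable_fst measurable_const).inter
          ((measurableSet_lt measurable_const measurable_snd).inter
            (measurableSet_lt (measurable_snd.const_mul α₁) (measurable_fst.const_mul α₂)))))
    have hC'm : MeasurableSet C' := by
      rw [hC'def]
      exact ((measurableSet_lt measurable_const measurable_fst).inter
        ((measurableSet_lt measurable_const measurable_snd).inter
          (measurableSet_lt (measurable_snd.const_mul α₁) (measurable_fst.const_mul α₂))))
    have hEBmap : ℙ EB = (μ₁'.prod μ₂') B' := by
      have hpre : EB = (fun ω => (X₁ ω, X₂ ω)) ⁻¹' B' := rfl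
      rw [hpre, ← Measure.map_apply (hX₁.prodMk hX₂) hB'm, hmap, hlaw₁', hlaw₂']
    have hECmap : ℙ EC = (μ₁'.prod μ₂') C' := by
      have hpre : EC = (fun ω => (X₁ ω, X₂ ω)) ⁻¹' C' := rfl
      rw [hpre, ← Measure.map_apply (hX₁.prodMk hX₂) hC'm, hmap, hlaw₁', hlaw₂']
    -- slices
    have hslB : ∀ x : ℝ, μ₂' (Prod.mk x ⁻¹' B')
        = Set.indicator (Ioc 0 a) (fun x => μ₂' (Ioo 0 (c * x))) x := by
      intro x
      by_cases hx : x ∈ Ioc 0 a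
      · rw [Set.indicator_of_mem hx]
        congr 1
        have hcx : α₁ * (c * x) = α₂ * x := by rw [hc_def]; field_simp
        ext y
        simp only [mem_preimage, hB'def, mem_setOf_eq, mem_Ioo]
        constructor
        · rintro ⟨_, _, h5, h6⟩
          exact ⟨h5, by nlinarith⟩
        · rintro ⟨h5, h6⟩
          exact ⟨hx.1, hx.2, h5, by nlinarith⟩
      · rw [Set.indicator_of_notMem hx]
        have : Prod.mk x ⁻¹' B' = ∅ := by
          rw [Set.eq_empty_iff_forall_notMem]
          intro y hy
          exact hx ⟨hy.1, hy.2.1⟩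
        rw [this, measure_empty]
    have hslC : ∀ x : ℝ, μ₂' (Prod.mk x ⁻¹' C')
        = Set.indicator (Ioi a) (fun x => μ₂' (Ioo 0 (c * x))) x := by
      intro x
      by_cases hx : x ∈ Ioi a
      · rw [Set.indicator_of_mem hx]
        congr 1
        have hx0 : 0 < x := ha.trans hx
        have hcx : α₁ * (c * x) = α₂ * x := by rw [hc_def]; field_simp
        ext y
        simp only [mem_preimage, hC'def, mem_setOf_eq, mem_Ioo]
        constructor
        · rintro ⟨_, h5, h6⟩
          exact ⟨h5, by nlinarith⟩
        · rintro ⟨h5, h6⟩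
          exact ⟨hx, h5, by nlinarith⟩
      · rw [Set.indicator_of_notMem hx]
        have : Prod.mk x ⁻¹' C' = ∅ := by
          rw [Set.eq_empty_iff_forall_notMem]
          intro y hy
          exact hx hy.1
        rw [this, measure_empty]
    have hGmono : Monotone fun x : ℝ => μ₂' (Ioo 0 (c * x)) :=
      fun x y hxy => measure_mono (Ioo_subset_Ioo le_rfl (mul_le_mul_of_nonneg_left hxy hc.le))
    have hGm : Measurable fun x : ℝ => μ₂' (Ioo 0 (c * x)) := hGmono.measurable
    -- inner scaling
    have hscale : ∀ x : ℝ, 0 < x → μ₂' (Ioo 0 (c * x))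
        = ∫⁻ t in Ioo 0 c, ENNReal.ofReal (x * g₂ (x * t)) := by
      intro x hx
      have hpre : (fun t : ℝ => x * t) ⁻¹' Ioo 0 (c * x) = Ioo 0 c := by
        rw [Set.preimage_const_mul_Ioo₀ _ _ hx, zero_div, mul_div_cancel_right₀ _ hx.ne']
      rw [hμ₂def, withDensity_apply _ measurableSet_Ioo,
        lint_scale x hx g₂ hg₂m _ measurableSet_Ioo, hpre]
    have hFm : Measurable (fun p : ℝ × ℝ =>
        ENNReal.ofReal (g₁ p.1) * ENNReal.ofReal (p.1 * g₂ (p.1 * p.2))) :=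
      ((hg₁m.comp measurable_fst).ennreal_ofReal).mul
        ((measurable_fst.mul (hg₂m.comp (measurable_fst.mul measurable_snd))).ennreal_ofReal)
    -- double integral representation
    have hind : ∀ x : ℝ, 0 < x →
        ENNReal.ofReal (g₁ x) * μ₂' (Ioo 0 (c * x))
        = ∫⁻ t in Ioo 0 c, ENNReal.ofReal (g₁ x) * ENNReal.ofReal (x * g₂ (x * t)) := by
      intro x hx
      rw [hscale x hx,
        ← lintegral_const_mul (f := fun t => ENNReal.ofReal (x * g₂ (x * t))) _ (by fun_prop)]
    have hQB : ℙ EB = ∫⁻ t in Ioo 0 c,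
        ∫⁻ x in Ioc 0 a, ENNReal.ofReal (g₁ x) * ENNReal.ofReal (x * g₂ (x * t)) := by
      have step : ∫⁻ x in Ioc 0 a, ENNReal.ofReal (g₁ x) * μ₂' (Ioo 0 (c * x))
          = ∫⁻ t in Ioo 0 c,
            ∫⁻ x in Ioc 0 a, ENNReal.ofReal (g₁ x) * ENNReal.ofReal (x * g₂ (x * t)) := by
        rw [setLIntegral_congr_fun_ae measurableSet_Ioc (Filter.Eventually.of_forall
          fun x (hx : x ∈ Ioc 0 a) => hind x hx.1)]
        exact lintegral_lintegral_swap hFm.aemeasurable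
      rw [hEBmap, Measure.prod_apply hB'm, lintegral_congr hslB,
        lintegral_indicator measurableSet_Ioc _, hμ₁def,
        setLIntegral_withDensity_eq_setLIntegral_mul _ hg₁m.ennreal_ofReal hGm measurableSet_Ioc,
        ← step]
      rfl
    have hQC : ℙ EC = ∫⁻ t in Ioo 0 c,
        ∫⁻ x in Ioi a, ENNReal.ofReal (g₁ x) * ENNReal.ofReal (x * g₂ (x * t)) := by
      have step : ∫⁻ x in Ioi a, ENNReal.ofReal (g₁ x) * μ₂' (Ioo 0 (c * x))
          = ∫⁻ t in Ioo 0 c,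
            ∫⁻ x in Ioi a, ENNReal.ofReal (g₁ x) * ENNReal.ofReal (x * g₂ (x * t)) := by
        rw [setLIntegral_congr_fun_ae measurableSet_Ioi (Filter.Eventually.of_forall
          fun x (hx : x ∈ Ioi a) => hind x (ha.trans hx))]
        exact lintegral_lintegral_swap hFm.aemeasurable
      rw [hECmap, Measure.prod_apply hC'm, lintegral_congr hslC,
        lintegral_indicator measurableSet_Ioi _, hμ₁def,
        setLIntegral_withDensity_eq_setLIntegral_mul _ hg₁m.ennreal_ofReal hGm measurableSet_Ioi,
        ← step]
      rfl
    rw [hQB, hQC]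
    have hG₁ : 0 < Real.Gamma α₁ := Real.Gamma_pos_of_pos hα₁
    have hG₂ : 0 < Real.Gamma α₂ := Real.Gamma_pos_of_pos hα₂
    refine setLIntegral_strict_mono measurableSet_Ioo ?_ ?_ ?_ ?_
    · simp only [Real.volume_Ioo, sub_zero]
      exact (ENNReal.ofReal_pos.2 hc).ne'
    · exact Measurable.lintegral_prod_left hFm
    · rw [← hQC]
      exact measure_ne_top _ _
    · refine Filter.Eventually.of_forall fun t ht => ?_
      obtain ⟨ht0, htc⟩ := ht
      set q : ℝ := 1 / θ₁ + t / θ₂ with hq_def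
      have hq : 0 < q := by positivity
      set K : ℝ := t ^ (α₂ - 1) / (Real.Gamma α₁ * θ₁ ^ α₁) / (Real.Gamma α₂ * θ₂ ^ α₂) with hK_def
      have hK0 : 0 < K :=
        div_pos (div_pos (Real.rpow_pos_of_pos ht0 _)
          (mul_pos hG₁ (Real.rpow_pos_of_pos hθ₁ _))) (mul_pos hG₂ (Real.rpow_pos_of_pos hθ₂ _))
      have halg : ∀ x : ℝ, 0 < x →
          ENNReal.ofReal (g₁ x) * ENNReal.ofReal (x * g₂ (x * t))
          = ENNReal.ofReal (K * (x ^ (α₁ + α₂ - 1) * Real.exp (-(q * x)))) := by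
        intro x hx
        have hxt : 0 < x * t := mul_pos hx ht0
        rw [hg₁def, hg₂def]
        simp only [if_pos hx, if_pos hxt]
        rw [← ENNReal.ofReal_mul (by positivity)]
        congr 1
        have hxp : x ^ (α₁ - 1) * x ^ (α₂ - 1) * x = x ^ (α₁ + α₂ - 1) := by
          have h1 : x ^ (α₁ - 1) * x ^ (α₂ - 1) = x ^ (α₁ + α₂ - 2) := by
            rw [← Real.rpow_add hx]; congr 1; ring
          rw [h1, ← Real.rpow_add_one hx.ne']
          congr 1; ring
        have hexp : Real.exp (-x / θ₁) * Real.exp (-(x * t) / θ₂) = Real.exp (-(q * x)) := by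
          rw [← Real.exp_add]
          congr 1
          rw [hq_def]
          field_simp
          ring
        rw [Real.mul_rpow hx.le ht0.le, ← hxp, ← hexp]
        ring
      have hrwB : ∫⁻ x in Ioc 0 a, ENNReal.ofReal (g₁ x) * ENNReal.ofReal (x * g₂ (x * t))
          = ENNReal.ofReal K *
            ∫⁻ x in Ioc 0 a, ENNReal.ofReal (x ^ (α₁ + α₂ - 1) * Real.exp (-(q * x))) := by
        rw [setLIntegral_congr_fun_ae measurableSet_Ioc (Filter.Eventually.of_forall
          fun x (hx : x ∈ Ioc 0 a) => by
            rw [halg x hx.1, ENNReal.ofReal_mul hK0.le]),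
          lintegral_const_mul (f := fun x => ENNReal.ofReal (x ^ (α₁ + α₂ - 1)
            * Real.exp (-(q * x)))) _ (by fun_prop)]
      have hrwC : ∫⁻ x in Ioi a, ENNReal.ofReal (g₁ x) * ENNReal.ofReal (x * g₂ (x * t))
          = ENNReal.ofReal K *
            ∫⁻ x in Ioi a, ENNReal.ofReal (x ^ (α₁ + α₂ - 1) * Real.exp (-(q * x))) := by
        rw [setLIntegral_congr_fun_ae measurableSet_Ioi (Filter.Eventually.of_forall
          fun x (hx : x ∈ Ioi a) => by
            rw [halg x (ha.trans hx), ENNReal.ofReal_mul hK0.le]),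
          lintegral_const_mul (f := fun x => ENNReal.ofReal (x ^ (α₁ + α₂ - 1)
            * Real.exp (-(q * x)))) _ (by fun_prop)]
      have hqa : ν (α₁ + α₂) < q * a := by
        have h1 : q * a = α₁ + α₁ * t * (θ₁ / θ₂) := by
          rw [hq_def, ha_def]
          field_simp
        have h2 : 0 < α₁ * t * (θ₁ / θ₂) := by positivity
        calc ν (α₁ + α₂) ≤ α₁ := hνα
          _ < q * a := by rw [h1]; linarith
      obtain ⟨hlt, hfin'⟩ := perq (α₁ + α₂) a q (ν (α₁ + α₂)) hs ha hq (hν _ hs) hqa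
      rw [hrwB, hrwC]
      exact (ENNReal.mul_lt_mul_iff_right (ENNReal.ofReal_pos.2 hK0).ne' ENNReal.ofReal_ne_top).2 hlt
  -- final arithmetic
  have h1 : ℙ EB ≤ ℙ {ω | W (X₁ ω / α₁ / θ₁) <
      W (min (X₁ ω / α₁) ((X₁ ω + X₂ ω) / (α₁ + α₂)) / θ₁)} := measure_mono hincl_lt
  have h2 : ℙ EE ≤ ℙ {ω | W (X₁ ω / α₁ / θ₁) =
      W (min (X₁ ω / α₁) ((X₁ ω + X₂ ω) / (α₁ + α₂)) / θ₁)} := measure_mono hincl_eq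
  have key : (1 : ℝ≥0∞) / 2 < ℙ EB + 1 / 2 * ℙ EE := by
    have h2ne0 : (1 / 2 : ℝ≥0∞) ≠ 0 := by norm_num
    have h2top : (1 / 2 : ℝ≥0∞) ≠ ∞ := by norm_num
    have hfin : ∀ s : Set Ω, ℙ s ≠ ∞ := fun s => measure_ne_top _ _
    calc (1 : ℝ≥0∞) / 2 = 1 / 2 * 1 := (mul_one _).symm
      _ ≤ 1 / 2 * (ℙ EE + (ℙ EB + ℙ EC)) := by gcongr
      _ = 1 / 2 * ℙ EE + (1 / 2 * ℙ EB + 1 / 2 * ℙ EC) := by rw [mul_add, mul_add]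
      _ < 1 / 2 * ℙ EE + (1 / 2 * ℙ EB + 1 / 2 * ℙ EB) := by
          refine ENNReal.add_lt_add_left (ENNReal.mul_ne_top h2top (hfin _)) ?_
          refine ENNReal.add_lt_add_left (ENNReal.mul_ne_top h2top (hfin _)) ?_
          exact (ENNReal.mul_lt_mul_iff_right h2ne0 h2top).2 hCB
      _ = 1 / 2 * ℙ EE + ℙ EB := by
          rw [← add_mul, one_div, ENNReal.inv_two_add_inv_two, one_mul]
      _ = ℙ EB + 1 / 2 * ℙ EE := add_comm _ _
  calc (1 : ℝ≥0∞) / 2 < ℙ EB + 1 / 2 * ℙ EE := key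
    _ ≤ _ := add_le_add h1 (mul_le_mul_right h2 _)
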